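/- arXiv:1410.3179 — 5 statements merged into one kernel-verified Lean document; each statement's English description precedes it below -/
import Mathlib

section
/- Let d > 0, b0 > d, m ≥ 0, and Λ(λ, c) = λ² − cλ − d + b0·e^{−λm}. There exists c > 0 such that Λ(λ, c) < 0 for some λ > 0; specifically, if c > 0 is sufficiently large then Λ(2(b0 − d)/c, c) < 0. -/
theorem stmt_2 (d b0 m : ℝ) (hd : 0 < d) (hb0 : d < b0) (hm : 0 ≤ m)
    (Λ : ℝ → ℝ → ℝ)
    (hΛ : ∀ l c, Λ l c = l ^ 2 - c * l - d + b0 * Real.exp (-l * m)) :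
    (∃ c > 0, ∃ l > 0, Λ l c < 0) ∧
    ∃ C > 0, ∀ c : ℝ, C < c → Λ (2 * (b0 - d) / c) c < 0 := by
  have hB : 0 < b0 - d := by linarith
  have hsB : 0 < Real.sqrt (b0 - d) := Real.sqrt_pos.mpr hB
  have key : ∀ c : ℝ, 2 * Real.sqrt (b0 - d) < c → Λ (2 * (b0 - d) / c) c < 0 := by
    intro c hc
    have hcpos : 0 < c := lt_trans (by positivity) hc
    set l := 2 * (b0 - d) / c with hl
    have hlpos : 0 < l := by positivity
    have hexp : Real.exp (-l * m) ≤ 1 := by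
      apply Real.exp_le_one_iff.mpr
      nlinarith
    have hcl : c * l = 2 * (b0 - d) := by
      rw [hl]
      field_simp [hcpos.ne']
    have hlsq : l < Real.sqrt (b0 - d) := by
      rw [hl, div_lt_iff₀ hcpos]
      nlinarith [Real.mul_self_sqrt hB.le, mul_lt_mul_of_pos_left hc hsB]
    have hl2 : l ^ 2 < b0 - d := by
      have := Real.sq_sqrt hB.le
      nlinarith
    rw [hΛ]
    nlinarith [hexp, hb0.le, Real.exp_pos (-l * m)]
  refine ⟨⟨2 * Real.sqrt (b0 - d) + 1, by positivity,
    2 * (b0 - d) / (2 * Real.sqrt (b0 - d) + 1), by positivity,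
    key _ (by linarith)⟩,
    2 * Real.sqrt (b0 - d), by positivity, key⟩
end

section
/- Let d > 0, b0 > d, m ≥ 0, and for each c such that Λ(·, c) = λ² − cλ − d + b0·e^{−λm} has a zero in (0, ∞), let λ1(c) denote its smallest positive zero. Then there exist constants L1, L2 > 0 such that c·λ1(c) < L1 and λ1(c) < L2 for all such c. -/
theorem stmt_6 (d b0 m : ℝ) (hd : 0 < d) (hb0 : d < b0) (hm : 0 ≤ m)
    (Λ : ℝ → ℝ → ℝ)
    (hΛ : ∀ l c, Λ l c = l ^ 2 - c * l - d + b0 * Real.exp (-l * m)) :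
    ∃ L1 > 0, ∃ L2 > 0, ∀ c > 0, ∀ l1 : ℝ, 0 < l1 → Λ l1 c = 0 →
      (∀ l, 0 < l → Λ l c = 0 → l1 ≤ l) →
      c * l1 < L1 ∧ l1 < L2 := by
  have hsq : 0 ≤ Real.sqrt d := Real.sqrt_nonneg d
  have hsqd : Real.sqrt d * Real.sqrt d = d := Real.mul_self_sqrt hd.le
  set L2 : ℝ := b0 - d + Real.sqrt d + 2 with hL2def
  have hL2pos : (0:ℝ) < L2 := by simp only [hL2def]; linarith
  have hL2ge2 : (2:ℝ) ≤ L2 := by simp only [hL2def]; linarith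
  refine ⟨(b0 - d + 1) * L2, by nlinarith, L2, hL2pos, ?_⟩
  intro c hc l1 hl1 hzero hmin
  by_cases hcase : b0 - d + 1 < c
  · -- large c: use IVT to find a small root
    set l0 : ℝ := (b0 - d + 1) / c with hl0def
    have hl0pos : 0 < l0 := div_pos (by linarith) hc
    have hcl0 : c * l0 = b0 - d + 1 := by
      rw [hl0def]; field_simp [hc.ne']
    have hl0lt1 : l0 < 1 := by
      rw [hl0def, div_lt_one hc]; linarith
    set f : ℝ → ℝ := fun l => Λ l c with hfdef
    have hfcont : ContinuousOn f (Set.Icc 0 l0) := by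
      have : f = fun l => l ^ 2 - c * l - d + b0 * Real.exp (-l * m) := by
        funext l; simp only [hfdef]; rw [hΛ]
      rw [this]
      fun_prop
    have hf0 : 0 < f 0 := by
      simp only [hfdef, hΛ]
      simp [Real.exp_zero]
      linarith
    have hfl0 : f l0 < 0 := by
      simp only [hfdef, hΛ]
      have hexp : Real.exp (-l0 * m) ≤ 1 := by
        apply Real.exp_le_one_iff.mpr
        nlinarith
      have : l0 ^ 2 < 1 := by nlinarith
      nlinarith
    have hivt := intermediate_value_Icc' (le_of_lt hl0pos) hfcont
    have h0mem : (0:ℝ) ∈ Set.Icc (f l0) (f 0) := ⟨hfl0.le, hf0.le⟩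
    obtain ⟨z, hz, hfz⟩ := hivt h0mem
    have hzpos : 0 < z := by
      rcases lt_or_eq_of_le hz.1 with h | h
      · exact h
      · exfalso; simp only [hfdef] at hfz; rw [← h] at hfz; linarith
    have hfz' : Λ z c = 0 := by simp only [hfdef] at hfz; exact hfz
    have hle : l1 ≤ z := hmin z hzpos hfz'
    have hzle : z ≤ l0 := hz.2
    constructor
    · have : c * l1 ≤ c * l0 := by nlinarith
      nlinarith
    · have : l1 < 1 := by linarith
      linarith
  · -- small c
    have hc' : c ≤ b0 - d + 1 := le_of_not_gt hcase
    have heq := hzero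
    rw [hΛ] at heq
    have hexp : 0 < Real.exp (-l1 * m) := Real.exp_pos _
    have hkey : l1 * (l1 - c) ≤ d := by nlinarith
    have hl1lt : l1 < c + Real.sqrt d + 1 := by nlinarith
    constructor
    · nlinarith
    · simp only [hL2def]; linarith
end

section
/- Let b : [0, K] → ℝ be C¹ with 0 ≤ b'(u) ≤ b0 on [0, K], and let τ : [0, ∞) → [0, ∞) be C¹ with 0 ≤ τ'(u) ≤ T for u ∈ [0, K]. Let c > 0, and suppose ϕ1, ϕ2 : ℝ → [0, K] are continuous with ϕ2(ξ) ≤ ϕ1(ξ) for all ξ, and both are Lipschitz with Lipschitz constant ℓ/c (i.e. c|ϕi(ξ1) − ϕi(ξ2)| ≤ ℓ|ξ1 − ξ2|). Then for all ξ: b(ϕ1(ξ − cτ(ϕ1(ξ)))) − b(ϕ2(ξ − cτ(ϕ2(ξ)))) ≥ −b0·ℓ·T·(ϕ1(ξ) − ϕ2(ξ)). -/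
theorem stmt_12 (K b0 T c ℓ : ℝ) (hK : 0 < K) (hb0 : 0 < b0) (hT : 0 ≤ T) (hc : 0 < c)
    (b b' : ℝ → ℝ)
    (hb : ∀ u ∈ Set.Icc (0 : ℝ) K, HasDerivAt b (b' u) u)
    (hb' : ∀ u ∈ Set.Icc (0 : ℝ) K, 0 ≤ b' u ∧ b' u ≤ b0)
    (τ τ' : ℝ → ℝ)
    (hτnn : ∀ u, 0 ≤ u → 0 ≤ τ u)
    (hτ : ∀ u ∈ Set.Icc (0 : ℝ) K, HasDerivAt τ (τ' u) u)
    (hτ' : ∀ u ∈ Set.Icc (0 : ℝ) K, 0 ≤ τ' u ∧ τ' u ≤ T)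
    (ϕ1 ϕ2 : ℝ → ℝ)
    (hϕ1c : Continuous ϕ1) (hϕ2c : Continuous ϕ2)
    (hϕ1r : ∀ ξ, ϕ1 ξ ∈ Set.Icc (0 : ℝ) K)
    (hϕ2r : ∀ ξ, ϕ2 ξ ∈ Set.Icc (0 : ℝ) K)
    (hle : ∀ ξ, ϕ2 ξ ≤ ϕ1 ξ)
    (hlip1 : ∀ ξ1 ξ2, c * |ϕ1 ξ1 - ϕ1 ξ2| ≤ ℓ * |ξ1 - ξ2|)
    (hlip2 : ∀ ξ1 ξ2, c * |ϕ2 ξ1 - ϕ2 ξ2| ≤ ℓ * |ξ1 - ξ2|) :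
    ∀ ξ : ℝ,
      b (ϕ1 (ξ - c * τ (ϕ1 ξ))) - b (ϕ2 (ξ - c * τ (ϕ2 ξ))) ≥
        -(b0 * ℓ * T) * (ϕ1 ξ - ϕ2 ξ) := by
  have hIcc : Convex ℝ (Set.Icc (0:ℝ) K) := convex_Icc 0 K
  -- b is b0-Lipschitz on Icc
  have bLip : ∀ x ∈ Set.Icc (0:ℝ) K, ∀ y ∈ Set.Icc (0:ℝ) K, |b y - b x| ≤ b0 * |y - x| := by
    intro x hx y hy
    have := Convex.norm_image_sub_le_of_norm_hasDerivWithin_le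
      (f := b) (f' := b') (s := Set.Icc (0:ℝ) K)
      (fun u hu => (hb u hu).hasDerivWithinAt)
      (fun u hu => by
        rw [Real.norm_eq_abs, abs_of_nonneg (hb' u hu).1]; exact (hb' u hu).2)
      hIcc hx hy
    simpa [Real.norm_eq_abs] using this
  have τLip : ∀ x ∈ Set.Icc (0:ℝ) K, ∀ y ∈ Set.Icc (0:ℝ) K, |τ y - τ x| ≤ T * |y - x| := by
    intro x hx y hy
    have := Convex.norm_image_sub_le_of_norm_hasDerivWithin_le
      (f := τ) (f' := τ') (s := Set.Icc (0:ℝ) K)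
      (fun u hu => (hτ u hu).hasDerivWithinAt)
      (fun u hu => by
        rw [Real.norm_eq_abs, abs_of_nonneg (hτ' u hu).1]; exact (hτ' u hu).2)
      hIcc hx hy
    simpa [Real.norm_eq_abs] using this
  have bMono : MonotoneOn b (Set.Icc (0:ℝ) K) := by
    apply monotoneOn_of_hasDerivWithinAt_nonneg hIcc
    · exact fun u hu => (hb u hu).continuousAt.continuousWithinAt
    · intro x hx
      exact ((hb x (interior_subset hx)).hasDerivWithinAt)
    · intro x hx
      exact (hb' x (interior_subset hx)).1
  have hℓ : 0 ≤ ℓ := by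
    have h := hlip1 0 1
    have : (0:ℝ) ≤ c * |ϕ1 0 - ϕ1 1| := mul_nonneg hc.le (abs_nonneg _)
    simp at h
    linarith
  intro ξ
  set A := ξ - c * τ (ϕ1 ξ) with hA
  set B := ξ - c * τ (ϕ2 ξ) with hB
  have h1 : b (ϕ2 A) ≤ b (ϕ1 A) := bMono (hϕ2r A) (hϕ1r A) (hle A)
  -- bound |b(ϕ2 A) - b(ϕ2 B)|
  have h2 : |b (ϕ2 A) - b (ϕ2 B)| ≤ b0 * |ϕ2 A - ϕ2 B| := by
    simpa [abs_sub_comm] using bLip (ϕ2 B) (hϕ2r B) (ϕ2 A) (hϕ2r A)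
  have h3 : c * |ϕ2 A - ϕ2 B| ≤ ℓ * |A - B| := hlip2 A B
  have hAB : |A - B| = c * |τ (ϕ1 ξ) - τ (ϕ2 ξ)| := by
    rw [hA, hB]
    rw [show ξ - c * τ (ϕ1 ξ) - (ξ - c * τ (ϕ2 ξ)) = -(c * (τ (ϕ1 ξ) - τ (ϕ2 ξ))) by ring]
    rw [abs_neg, abs_mul, abs_of_pos hc]
  have h4 : |τ (ϕ1 ξ) - τ (ϕ2 ξ)| ≤ T * (ϕ1 ξ - ϕ2 ξ) := by
    have := τLip (ϕ2 ξ) (hϕ2r ξ) (ϕ1 ξ) (hϕ1r ξ)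
    rwa [abs_of_nonneg (sub_nonneg.2 (hle ξ))] at this
  have h5 : |ϕ2 A - ϕ2 B| ≤ ℓ * (T * (ϕ1 ξ - ϕ2 ξ)) := by
    have h6 : c * |ϕ2 A - ϕ2 B| ≤ ℓ * (c * (T * (ϕ1 ξ - ϕ2 ξ))) := by
      calc c * |ϕ2 A - ϕ2 B| ≤ ℓ * |A - B| := h3
        _ = ℓ * (c * |τ (ϕ1 ξ) - τ (ϕ2 ξ)|) := by rw [hAB]
        _ ≤ ℓ * (c * (T * (ϕ1 ξ - ϕ2 ξ))) := by
            apply mul_le_mul_of_nonneg_left _ hℓ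
            exact mul_le_mul_of_nonneg_left h4 hc.le
    nlinarith
  have h2' := abs_le.1 h2
  have h5' : b0 * |ϕ2 A - ϕ2 B| ≤ b0 * (ℓ * (T * (ϕ1 ξ - ϕ2 ξ))) :=
    mul_le_mul_of_nonneg_left h5 hb0.le
  have habs := abs_le.1 h2
  nlinarith [abs_nonneg (ϕ2 A - ϕ2 B)]
end

section
/- Let b : [0, K] → ℝ be C¹ with 0 ≤ b'(u) ≤ b0 on [0, K], τ : [0, ∞) → [0, ∞) C¹ with 0 ≤ τ'(u) ≤ T on [0, K], c > 0, d > 0, and β ≥ d(1 + b0·K·T) + ((1 + b0·K·T)²·c²)/4. Then for any continuous ϕ1, ϕ2 : ℝ → [0, K] with ϕ2 ≤ ϕ1 pointwise, each Lipschitz with constant (βK)/(c(1 + b0·K·T)), the map H(ϕ)(ξ) = βϕ(ξ) − dϕ(ξ) + b(ϕ(ξ − cτ(ϕ(ξ)))) satisfies H(ϕ1)(ξ) ≥ H(ϕ2)(ξ) for all ξ ∈ ℝ. -/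
lemma aux_incr_bound (K C : ℝ) (f f' : ℝ → ℝ)
    (hf : ∀ u ∈ Set.Icc (0 : ℝ) K, HasDerivAt f (f' u) u)
    (hf' : ∀ u ∈ Set.Icc (0 : ℝ) K, 0 ≤ f' u ∧ f' u ≤ C) :
    ∀ u ∈ Set.Icc (0 : ℝ) K, ∀ v ∈ Set.Icc (0 : ℝ) K, v ≤ u →
      0 ≤ f u - f v ∧ f u - f v ≤ C * (u - v) := by
  have hconv : Convex ℝ (Set.Icc (0 : ℝ) K) := convex_Icc _ _
  have hcont : ContinuousOn f (Set.Icc (0 : ℝ) K) := fun x hx =>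
    (hf x hx).continuousAt.continuousWithinAt
  have hdiff : DifferentiableOn ℝ f (interior (Set.Icc (0 : ℝ) K)) := fun x hx =>
    ((hf x (interior_subset hx)).differentiableAt).differentiableWithinAt
  have hderiv : ∀ x ∈ interior (Set.Icc (0 : ℝ) K), deriv f x = f' x := fun x hx =>
    (hf x (interior_subset hx)).deriv
  intro u hu v hv hvu
  constructor
  · have := hconv.mul_sub_le_image_sub_of_le_deriv hcont hdiff
      (fun x hx => by rw [hderiv x hx]; exact (hf' x (interior_subset hx)).1) v hv u hu hvu
    linarith
  · have := hconv.image_sub_le_mul_sub_of_deriv_le hcont hdiff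
      (fun x hx => by rw [hderiv x hx]; exact (hf' x (interior_subset hx)).2) v hv u hu hvu
    linarith

set_option maxHeartbeats 1600000 in
theorem stmt_13 (K b0 T c d β : ℝ) (hK : 0 < K) (hb0 : 0 < b0) (hT : 0 ≤ T)
    (hc : 0 < c) (hd : 0 < d)
    (hβ : β ≥ d * (1 + b0 * K * T) + (1 + b0 * K * T) ^ 2 * c ^ 2 / 4)
    (b b' : ℝ → ℝ)
    (hb : ∀ u ∈ Set.Icc (0 : ℝ) K, HasDerivAt b (b' u) u)
    (hb' : ∀ u ∈ Set.Icc (0 : ℝ) K, 0 ≤ b' u ∧ b' u ≤ b0)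
    (τ τ' : ℝ → ℝ)
    (hτnn : ∀ u, 0 ≤ u → 0 ≤ τ u)
    (hτ : ∀ u ∈ Set.Icc (0 : ℝ) K, HasDerivAt τ (τ' u) u)
    (hτ' : ∀ u ∈ Set.Icc (0 : ℝ) K, 0 ≤ τ' u ∧ τ' u ≤ T)
    (ϕ1 ϕ2 : ℝ → ℝ)
    (hϕ1c : Continuous ϕ1) (hϕ2c : Continuous ϕ2)
    (hϕ1r : ∀ ξ, ϕ1 ξ ∈ Set.Icc (0 : ℝ) K)
    (hϕ2r : ∀ ξ, ϕ2 ξ ∈ Set.Icc (0 : ℝ) K)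
    (hle : ∀ ξ, ϕ2 ξ ≤ ϕ1 ξ)
    (hlip1 : ∀ ξ1 ξ2, c * |ϕ1 ξ1 - ϕ1 ξ2| ≤ (β * K / (1 + b0 * K * T)) * |ξ1 - ξ2|)
    (hlip2 : ∀ ξ1 ξ2, c * |ϕ2 ξ1 - ϕ2 ξ2| ≤ (β * K / (1 + b0 * K * T)) * |ξ1 - ξ2|)
    (H : (ℝ → ℝ) → ℝ → ℝ)
    (hH : ∀ ϕ ξ, H ϕ ξ = β * ϕ ξ - d * ϕ ξ + b (ϕ (ξ - c * τ (ϕ ξ)))) :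
    ∀ ξ : ℝ, H ϕ1 ξ ≥ H ϕ2 ξ := by
  have hA : (0 : ℝ) < 1 + b0 * K * T := by
    have : 0 ≤ b0 * K * T := by positivity
    linarith
  have hβd : β ≥ d * (1 + b0 * K * T) := by nlinarith [sq_nonneg ((1 + b0 * K * T) * c)]
  have hβpos : 0 < β := by nlinarith
  have hτb := aux_incr_bound K T τ τ' hτ hτ'
  have hbb := aux_incr_bound K b0 b b' hb hb'
  intro ξ
  have ha := hϕ1r ξ
  have hb2 := hϕ2r ξ
  have hτest := hτb (ϕ1 ξ) ha (ϕ2 ξ) hb2 (hle ξ)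
  set ξ1 := ξ - c * τ (ϕ1 ξ) with hξ1
  set ξ2 := ξ - c * τ (ϕ2 ξ) with hξ2
  have hξle : ξ1 ≤ ξ2 := by
    simp only [hξ1, hξ2]
    nlinarith [hτest.1]
  -- Lipschitz bound on ϕ2 between ξ1 and ξ2
  have habs : |ξ1 - ξ2| = c * (τ (ϕ1 ξ) - τ (ϕ2 ξ)) := by
    rw [abs_sub_comm, abs_of_nonneg (by linarith)]
    simp only [hξ1, hξ2]; ring
  have hlip := hlip2 ξ1 ξ2
  rw [habs] at hlip
  have hϕ2bd : c * |ϕ2 ξ1 - ϕ2 ξ2| ≤ β * K / (1 + b0 * K * T) * (c * (T * (ϕ1 ξ - ϕ2 ξ))) := by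
    refine hlip.trans ?_
    have h1 : 0 ≤ β * K / (1 + b0 * K * T) := by positivity
    exact mul_le_mul_of_nonneg_left (by nlinarith [hτest.2]) h1
  have hϕ2bd' : |ϕ2 ξ1 - ϕ2 ξ2| ≤ β * K / (1 + b0 * K * T) * (T * (ϕ1 ξ - ϕ2 ξ)) := by
    nlinarith
  -- b difference bound
  have hbdiff : |b (ϕ2 ξ1) - b (ϕ2 ξ2)| ≤ b0 * |ϕ2 ξ1 - ϕ2 ξ2| := by
    rcases le_total (ϕ2 ξ2) (ϕ2 ξ1) with h | h
    · have := hbb (ϕ2 ξ1) (hϕ2r ξ1) (ϕ2 ξ2) (hϕ2r ξ2) h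
      rw [abs_of_nonneg (by linarith [this.1]), abs_of_nonneg (by linarith)]
      exact this.2
    · have := hbb (ϕ2 ξ2) (hϕ2r ξ2) (ϕ2 ξ1) (hϕ2r ξ1) h
      rw [abs_sub_comm, abs_sub_comm (ϕ2 ξ1), abs_of_nonneg (by linarith [this.1]),
        abs_of_nonneg (by linarith)]
      exact this.2
  -- monotonicity of b at ξ1
  have hmono : b (ϕ2 ξ1) ≤ b (ϕ1 ξ1) :=
    by linarith [(hbb (ϕ1 ξ1) (hϕ1r ξ1) (ϕ2 ξ1) (hϕ2r ξ1) (hle ξ1)).1]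
  -- combine
  rw [hH, hH]
  have key : b (ϕ2 ξ1) - b (ϕ2 ξ2) ≥ -(b0 * (β * K / (1 + b0 * K * T) * (T * (ϕ1 ξ - ϕ2 ξ)))) := by
    have h2 : b (ϕ2 ξ1) - b (ϕ2 ξ2) ≥ -(b0 * |ϕ2 ξ1 - ϕ2 ξ2|) := by
      have := neg_abs_le (b (ϕ2 ξ1) - b (ϕ2 ξ2))
      linarith [hbdiff]
    nlinarith [abs_nonneg (ϕ2 ξ1 - ϕ2 ξ2)]
  have hLA : β * K / (1 + b0 * K * T) * (1 + b0 * K * T) = β * K := by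
    field_simp
  have hdiffle : ϕ1 ξ - ϕ2 ξ ≥ 0 := by linarith [hle ξ]
  -- final inequality
  have hcoef : (β - d) - b0 * (β * K / (1 + b0 * K * T)) * T ≥ 0 := by
    have hexp : ((β - d) - b0 * (β * K / (1 + b0 * K * T)) * T) * (1 + b0 * K * T)
        = β - d * (1 + b0 * K * T) := by
      field_simp
      ring
    nlinarith [hexp, hA, hβd]
  have hprod := mul_nonneg hcoef hdiffle
  clear hlip1 hlip2 hlip hb hb' hτ hτ' hτnn hϕ1c hϕ2c hbdiff hϕ2bd hϕ2bd' habs hτest hτb hbb hH hβ hLA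
  nlinarith [key, hmono, hprod]
end

section
/- Let d > 0, b0 > d, m ≥ 0, and Λ(λ, c) = λ² − cλ − d + b0·e^{−λm}. Define c* = inf{ c > 0 : ∃ λ > 0, Λ(λ, c) ≤ 0 }. Then for every c > c*, there exists λ > 0 with Λ(λ, c) < 0, and for every c ∈ [0, c*), Λ(λ, c) > 0 for all λ ≥ 0. -/
theorem stmt_19 (d b0 m : ℝ) (hd : 0 < d) (hb0 : d < b0) (hm : 0 ≤ m)
    (Λ : ℝ → ℝ → ℝ)
    (hΛ : ∀ l c, Λ l c = l ^ 2 - c * l - d + b0 * Real.exp (-l * m))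
    (cstar : ℝ)
    (hcstar : cstar = sInf { c : ℝ | 0 < c ∧ ∃ l > 0, Λ l c ≤ 0 }) :
    (∀ c, cstar < c → ∃ l > 0, Λ l c < 0) ∧
    (∀ c, 0 ≤ c → c < cstar → ∀ l, 0 ≤ l → 0 < Λ l c) := by
  set S : Set ℝ := { c : ℝ | 0 < c ∧ ∃ l > 0, Λ l c ≤ 0 } with hS
  have hb0pos : 0 < b0 := hd.trans hb0
  have hne : S.Nonempty := by
    refine ⟨1 + b0, by linarith, 1, one_pos, ?_⟩
    have hexp : Real.exp (-1 * m) ≤ 1 := by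
      rw [Real.exp_le_one_iff]; linarith
    have : b0 * Real.exp (-1 * m) ≤ b0 * 1 := by
      apply mul_le_mul_of_nonneg_left hexp hb0pos.le
    rw [hΛ]; nlinarith
  have hbdd : BddBelow S := ⟨0, fun c hc => hc.1.le⟩
  constructor
  · intro c hc
    rw [hcstar] at hc
    obtain ⟨c0, hc0S, hc0lt⟩ := exists_lt_of_csInf_lt hne hc
    obtain ⟨hc0pos, l, hl, hΛle⟩ := hc0S
    refine ⟨l, hl, ?_⟩
    have h1 : Λ l c = Λ l c0 - (c - c0) * l := by rw [hΛ, hΛ]; ring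
    nlinarith
  · intro c hc hclt l hl
    rcases eq_or_lt_of_le hl with h0 | h0
    · rw [hΛ, ← h0]; simp; linarith
    · set c' := (c + cstar) / 2 with hc'
      have hc'pos : 0 < c' := by rw [hc']; linarith
      have hc'lt : c' < cstar := by rw [hc']; linarith
      have hc'notS : c' ∉ S := by
        intro hmem
        have := csInf_le hbdd hmem
        rw [← hcstar] at this; linarith
      have hΛ' : 0 < Λ l c' := by
        by_contra h
        exact hc'notS ⟨hc'pos, l, h0, le_of_not_gt h⟩
      have h1 : Λ l c = Λ l c' + (c' - c) * l := by rw [hΛ, hΛ]; ring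
      have : c < c' := by rw [hc']; linarith
      nlinarith
end
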